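/- Let Σ be a set of linear TGDs and I0 an instance. If a Boolean conjunctive query Q has a match h in the final chase tree T of a tree-like chase sequence for I0 and Σ, then there is another tree-like chase sequence for I0 and Σ with final tree T' and a match h' of Q in T' such that whenever a node n is the image parent of a node n' in the augmented image of h', the nodes n and n' are near (i.e., h' is a tight match). -/

import Mathlib

namespace GTGDPaper

/-! ## Basic syntax: atoms, facts, TGDs, CQs -/

/-- An atom: a relation name together with a list of arguments.
Arguments are natural numbers, read as variables in rule atoms
and as domain elements in facts. -/
structure Atom where
  rel : ℕ
  args : List ℕ
deriving DecidableEq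

/-- A fact is an atom whose arguments are read as domain elements. -/
abbrev Fact := Atom

/-- The variables (resp. domain elements) occurring in an atom (resp. fact). -/
def Atom.vars (A : Atom) : Finset ℕ := A.args.toFinset

/-- Apply a substitution to an atom (also used to instantiate atoms into facts and to
rename the elements of facts). -/
def Atom.rename (σ : ℕ → ℕ) (A : Atom) : Atom := ⟨A.rel, A.args.map σ⟩

/-- The active domain of a finite set of facts. -/
def adomF (I : Finset Fact) : Finset ℕ := I.biUnion Atom.vars

/-- A single-headed tuple-generating dependency (TGD):
`∀ x⃗ (body → ∃ y⃗ head)` where the existential variables are the variables of the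
head not occurring in the body. -/
structure TGD where
  body : List Atom
  head : Atom
deriving DecidableEq

def TGD.bodyVars (τ : TGD) : Finset ℕ := τ.body.foldr (fun A s => A.vars ∪ s) ∅

/-- Exported (frontier) variables: the variables occurring both in the body and the head. -/
def TGD.exported (τ : TGD) : Finset ℕ := τ.head.vars ∩ τ.bodyVars

/-- The width of a TGD: its number of exported variables. -/
def TGD.width (τ : TGD) : ℕ := τ.exported.card

/-- The existentially quantified variables of a TGD. -/
def TGD.existVars (τ : TGD) : Finset ℕ := τ.head.vars \ τ.bodyVars

/-- A full TGD: no existentially quantified variable in the head. -/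
def TGD.isFull (τ : TGD) : Prop := τ.head.vars ⊆ τ.bodyVars

/-- A linear TGD: the body is a single atom. -/
def TGD.linear (τ : TGD) : Prop := τ.body.length = 1

/-- `A` is a guard of `τ`: a body atom containing all body variables. -/
def isGuard (τ : TGD) (A : Atom) : Prop := A ∈ τ.body ∧ τ.bodyVars ⊆ A.vars

/-- A guarded TGD (GTGD). -/
def TGD.guarded (τ : TGD) : Prop := ∃ A, isGuard τ A

/-- Satisfaction of a TGD by a (possibly infinite) instance, with active-domain semantics:
every trigger of the body extends to a match of the head. -/
def TGD.holdsIn (τ : TGD) (I : Set Fact) : Prop :=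
  ∀ σ : ℕ → ℕ, (∀ A ∈ τ.body, A.rename σ ∈ I) →
    ∃ σ' : ℕ → ℕ, (∀ v ∈ τ.bodyVars, σ' v = σ v) ∧ τ.head.rename σ' ∈ I

/-- A Boolean conjunctive query: a list of atoms, all of whose variables are
existentially quantified. -/
abbrev CQ := List Atom

/-- A Boolean CQ holds in an instance if it has a match there. -/
def CQholds (Q : CQ) (I : Set Fact) : Prop :=
  ∃ σ : ℕ → ℕ, ∀ A ∈ Q, A.rename σ ∈ I

/-- Open-world query answering entailment, with the theory given as a predicate on TGDs. -/
def entailsQS (I0 : Set Fact) (R : TGD → Prop) (Q : CQ) : Prop :=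
  ∀ J : Set Fact, I0 ⊆ J → (∀ τ, R τ → τ.holdsIn J) → CQholds Q J

/-- `I0, Σ ⊨ Q` : the Boolean CQ `Q` has a match in every superinstance of `I0`
satisfying all TGDs of `Th`. -/
def entailsQ (I0 : Finset Fact) (Th : Finset TGD) (Q : CQ) : Prop :=
  entailsQS ↑I0 (· ∈ Th) Q

/-- `I0, Σ ⊨ F` : the fact `F` belongs to every superinstance of `I0` satisfying `Th`. -/
def entailsF (I0 : Finset Fact) (Th : Finset TGD) (F : Fact) : Prop :=
  ∀ J : Set Fact, ↑I0 ⊆ J → (∀ τ ∈ Th, τ.holdsIn J) → F ∈ J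

/-- Logical entailment of a TGD by a set of TGDs. -/
def logEntails (Th : Finset TGD) (τ : TGD) : Prop :=
  ∀ J : Set Fact, (∀ γ ∈ Th, γ.holdsIn J) → τ.holdsIn J

/-! ## Signatures -/

/-- A relational signature: a finite set of relation names with their arities. -/
structure Sig where
  rels : Finset ℕ
  ar : ℕ → ℕ

/-- The arity of a signature: maximal arity of its relations. -/
def Sig.arity (S : Sig) : ℕ := S.rels.sup S.ar

def Sig.wfAtom (S : Sig) (A : Atom) : Prop := A.rel ∈ S.rels ∧ A.args.length = S.ar A.rel

def Sig.wfTGD (S : Sig) (τ : TGD) : Prop := (∀ A ∈ τ.body, S.wfAtom A) ∧ S.wfAtom τ.head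

/-! ## Side signatures -/

/-- A GTGD obeys side signature `S'` if for some choice of guard atom in its body,
all other body atoms are on relations of `S'`. -/
def TGD.obeys (τ : TGD) (S' : Finset ℕ) : Prop :=
  ∃ A, isGuard τ A ∧ ∀ B ∈ τ.body, B = A ∨ B.rel ∈ S'

/-- A principal guard: a guard atom on a principal (non-side) relation. -/
def isPrincipalGuard (S' : Finset ℕ) (τ : TGD) (A : Atom) : Prop :=
  isGuard τ A ∧ A.rel ∉ S'

/-- Renaming of the exported variables of a TGD by a function `h`
(identity on the other variables). -/
def TGD.renameExported (τ : TGD) (h : ℕ → ℕ) : TGD :=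
  ⟨τ.body.map (Atom.rename fun v => if v ∈ τ.exported then h v else v),
   (Atom.rename fun v => if v ∈ τ.exported then h v else v) τ.head⟩

/-- Homomorphism-closure: the set of GTGDs is closed under maps identifying
exported variables. -/
def homClosed (Th : Finset TGD) : Prop :=
  ∀ τ ∈ Th, ∀ h : ℕ → ℕ, (∀ v ∈ τ.exported, h v ∈ τ.exported) →
    τ.renameExported h ∈ Th

/-- A set of GTGDs strongly obeys side signature `S'`: it obeys `S'`,
is homomorphism-closed, every GTGD has exactly one principal guard, and
every non-full GTGD has a principal head atom. -/
def stronglyObeys (Th : Finset TGD) (S' : Finset ℕ) : Prop :=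
  (∀ τ ∈ Th, τ.obeys S') ∧
  homClosed Th ∧
  (∀ τ ∈ Th, ∃! A : Atom, isPrincipalGuard S' τ A) ∧
  (∀ τ ∈ Th, ¬ τ.isFull → τ.head.rel ∉ S')

/-- Maximal width of a finite set of TGDs. -/
def maxWidth (Th : Finset TGD) : ℕ := Th.sup TGD.width

/-! ## Emulation -/

/-- `I0', Th'` emulates `I0, Th` on signature `S`: the two pairs entail the same
Boolean CQs over `S`. -/
def emulates (I0' : Finset Fact) (Th' : Finset TGD) (I0 : Finset Fact) (Th : Finset TGD)
    (S : Sig) : Prop :=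
  ∀ Q : CQ, (∀ A ∈ Q, S.wfAtom A) → (entailsQ I0 Th Q ↔ entailsQ I0' Th' Q)

/-! ## Semi-width -/

/-- Edge of the basic position graph of a set of TGDs: an edge from position `(R,i)` to
`(U,j)` when some TGD has an exported variable at position `i` of an `R`-atom of its body
and at position `j` of its head atom, on relation `U`. -/
def posEdge (Th : Finset TGD) (p q : ℕ × ℕ) : Prop :=
  ∃ τ ∈ Th, ∃ x ∈ τ.exported, ∃ A ∈ τ.body,
    A.rel = p.1 ∧ A.args[p.2]? = some x ∧ τ.head.rel = q.1 ∧ τ.head.args[q.2]? = some x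

/-- The basic position graph is acyclic. -/
def posAcyclic (Th : Finset TGD) : Prop :=
  ∀ p, ¬ Relation.TransGen (posEdge Th) p p

/-- Semi-width at most `w`: the TGDs decompose into a part of width at most `w` and a part
whose basic position graph is acyclic. -/
def semiWidthLe (Th : Finset TGD) (w : ℕ) : Prop :=
  ∃ T1 T2 : Finset TGD, Th = T1 ∪ T2 ∧ (∀ τ ∈ T1, τ.width ≤ w) ∧ posAcyclic T2

/-! ## Isomorphic copies -/

/-- `B` is an isomorphic copy of the atom `A`. -/
def atomIso (A B : Atom) : Prop :=
  ∃ r : ℕ → ℕ, Set.InjOn r ↑A.vars ∧ B = A.rename r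

def TGD.allVars (τ : TGD) : Finset ℕ := τ.bodyVars ∪ τ.head.vars

def TGD.renameAll (σ : ℕ → ℕ) (τ : TGD) : TGD :=
  ⟨τ.body.map (Atom.rename σ), τ.head.rename σ⟩

/-- `τ` is a variable-renaming (isomorphic copy) of the TGD `γ`. -/
def tgdIso (γ τ : TGD) : Prop :=
  ∃ r : ℕ → ℕ, Set.InjOn r ↑γ.allVars ∧ τ = γ.renameAll r

/-- An isomorphism from a finite instance `S` onto a set of facts `T`. -/
def instIso (S : Finset Fact) (T : Set Fact) : Prop :=
  ∃ h : ℕ → ℕ, Set.InjOn h ↑(adomF S) ∧ T = (Atom.rename h) '' ↑S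

/-! ## Childish instances and saturations -/

/-- A childish instance: one principal fact which is an isomorphic copy of some GTGD head
of `Th`, together with side facts whose active domain is a set of at most `w` elements
of the principal fact. -/
def childish (Th : Finset TGD) (S' : Finset ℕ) (w : ℕ) (I : Finset Fact) : Prop :=
  ∃ F ∈ I, F.rel ∉ S' ∧ (∃ τ ∈ Th, atomIso τ.head F) ∧
    (∀ G ∈ I, G ≠ F → G.rel ∈ S' ∧ G.vars ⊆ F.vars) ∧
    (adomF (I.erase F)).card ≤ w

/-- A childish saturation of `Th`: a finite set of full TGDs, each entailed by `Th`,
which is complete for fact entailment over childish instances. -/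
def childishSaturation (Th : Finset TGD) (S' : Finset ℕ) (w : ℕ) (Th' : Finset TGD) : Prop :=
  (∀ τ ∈ Th', τ.isFull) ∧
  (∀ τ ∈ Th', logEntails Th τ) ∧
  (∀ I : Finset Fact, childish Th S' w I →
    ∀ F : Fact, F.vars ⊆ adomF I → entailsF I Th F → entailsF I Th' F)

/-- A `Th`-fact-saturated instance: closed under entailed facts on the same domain. -/
def factSaturated (Th : Finset TGD) (I : Finset Fact) : Prop :=
  ∀ F : Fact, F.vars ⊆ adomF I → entailsF I Th F → F ∈ I

/-! ## Suitable GTGDs and the suitable saturation -/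

/-- An atom is `Th`-compatible: it is a side atom, or isomorphic to the head atom of
some GTGD of `Th`. -/
def compatible (Th : Finset TGD) (S' : Finset ℕ) (A : Atom) : Prop :=
  A.rel ∈ S' ∨ ∃ τ ∈ Th, atomIso τ.head A

/-- Breadth at most `b`: the non-guard body atoms only use at most `b` variables of the
principal guard. -/
def breadthLe (S' : Finset ℕ) (τ : TGD) (b : ℕ) : Prop :=
  ∃ A, isPrincipalGuard S' τ A ∧ ∃ X : Finset ℕ, X ⊆ A.vars ∧ X.card ≤ b ∧
    ∀ B ∈ τ.body, B ≠ A → B.vars ⊆ X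

/-- A `Th`-suitable GTGD: a well-formed full GTGD obeying the side signature, which is
`Th`-compatible, has exactly one principal guard, breadth at most `w` and width at
most `w`. -/
def suitable (Sg : Sig) (S' : Finset ℕ) (Th : Finset TGD) (w : ℕ) (τ : TGD) : Prop :=
  Sg.wfTGD τ ∧ τ.isFull ∧ τ.obeys S' ∧
  (∃! A : Atom, isPrincipalGuard S' τ A) ∧
  (∀ A, isPrincipalGuard S' τ A → compatible Th S' A) ∧
  compatible Th S' τ.head ∧
  breadthLe S' τ w ∧ τ.width ≤ w

/-- The trivial full GTGDs `Σ_triv`: the body consists of a principal atom `A` which is an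
isomorphic copy of a GTGD head of `Th` and of side atoms on at most `w` variables of `A`,
and the head is `A` itself. -/
def trivTGD (Sg : Sig) (S' : Finset ℕ) (Th : Finset TGD) (w : ℕ) (τ : TGD) : Prop :=
  Sg.wfTGD τ ∧ ∃ A ∈ τ.body, A.rel ∉ S' ∧ (∃ γ ∈ Th, atomIso γ.head A) ∧ τ.head = A ∧
    ∃ X : Finset ℕ, X ⊆ A.vars ∧ X.card ≤ w ∧
      ∀ B ∈ τ.body, B ≠ A → B.rel ∈ S' ∧ B.vars ⊆ X

/-- The `S'`-suitable saturation `Ω(Σ)`: closure of the suitable full GTGDs of `Th` and of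
the trivial suitable full GTGDs under the inference rules (Transitivity) and
(Principal+Transitivity), keeping only suitable conclusions. -/
inductive Sat (Sg : Sig) (S' : Finset ℕ) (Th : Finset TGD) (w : ℕ) : TGD → Prop
  | base {τ : TGD} (hτ : τ ∈ Th) (hs : suitable Sg S' Th w τ) : Sat Sg S' Th w τ
  | triv {τ : TGD} (ht : trivTGD Sg S' Th w τ) (hs : suitable Sg S' Th w τ) : Sat Sg S' Th w τ
  | transTh {β Bs1 Bs2 : List Atom} {δ : TGD} {υ : ℕ → ℕ}
      (hBs1 : ∀ B ∈ Bs1, Sat Sg S' Th w ⟨β, B⟩)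
      (hBs2 : ∀ B ∈ Bs2, trivTGD Sg S' Th w ⟨β, B⟩)
      (hδ : δ ∈ Th)
      (hfull : δ.isFull)
      (hhom : ∀ A ∈ δ.body, A.rename υ ∈ β ∨ A.rename υ ∈ Bs1 ∨ A.rename υ ∈ Bs2)
      (hs : suitable Sg S' Th w ⟨β, δ.head.rename υ⟩) :
      Sat Sg S' Th w ⟨β, δ.head.rename υ⟩
  | transSat {β Bs1 Bs2 : List Atom} {δ : TGD} {υ : ℕ → ℕ}
      (hBs1 : ∀ B ∈ Bs1, Sat Sg S' Th w ⟨β, B⟩)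
      (hBs2 : ∀ B ∈ Bs2, trivTGD Sg S' Th w ⟨β, B⟩)
      (hδ : Sat Sg S' Th w δ)
      (hfull : δ.isFull)
      (hhom : ∀ A ∈ δ.body, A.rename υ ∈ β ∨ A.rename υ ∈ Bs1 ∨ A.rename υ ∈ Bs2)
      (hs : suitable Sg S' Th w ⟨β, δ.head.rename υ⟩) :
      Sat Sg S' Th w ⟨β, δ.head.rename υ⟩
  | princTrans {β Bs1 Bs2 : List Atom} {δcc : TGD} {Acc : Atom} {δ0 δ' : TGD} {v : ℕ → ℕ}
      (hBs1 : ∀ B ∈ Bs1, Sat Sg S' Th w ⟨β, B⟩)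
      (hBs2 : ∀ B ∈ Bs2, trivTGD Sg S' Th w ⟨β, B⟩)
      (hcc : δcc ∈ Th) (hccP : δcc.head.rel ∉ S')
      (hAcc : isPrincipalGuard S' δcc Acc)
      (hδ0 : Sat Sg S' Th w δ0)
      (hiso : tgdIso δ0 δ')
      (hfull : δ'.isFull)
      (hguard : isPrincipalGuard S' δ' δcc.head)
      (hside : ∀ A ∈ δ'.body, A ≠ δcc.head → A.vars ⊆ δcc.exported)
      (hheadv : δ'.head.vars ⊆ δcc.exported)
      (hv1 : Acc.rename v ∈ β ∨ Acc.rename v ∈ Bs1 ∨ Acc.rename v ∈ Bs2)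
      (hv2 : ∀ A ∈ δcc.body, A ≠ Acc →
        (A.rename v ∈ β ∨ A.rename v ∈ Bs1 ∨ A.rename v ∈ Bs2))
      (hv3 : ∀ A ∈ δ'.body, A ≠ δcc.head →
        (A.rename v ∈ β ∨ A.rename v ∈ Bs1 ∨ A.rename v ∈ Bs2))
      (hs : suitable Sg S' Th w ⟨β, δ'.head.rename v⟩) :
      Sat Sg S' Th w ⟨β, δ'.head.rename v⟩


/-! ## Chase trees and the principal-exempt one-pass chase -/

/-- A chase tree: a finite prefix-closed set of node positions (the root is `[]`,
children of `v` are `v ++ [k]`), a labelling of nodes by finite sets of facts,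
and a recently-updated node. -/
structure CTree where
  nodes : Finset (List ℕ)
  lbl : List ℕ → Finset Fact
  recent : List ℕ

/-- All facts of a chase tree (its underlying instance). -/
def CTree.facts (T : CTree) : Finset Fact := T.nodes.biUnion T.lbl

/-- The active domain of a chase tree. -/
def CTree.adom (T : CTree) : Finset ℕ := T.nodes.biUnion fun v => adomF (T.lbl v)

/-- The initial chase tree on instance `I0`: a single root node labelled `I0`. -/
def initTree (I0 : Finset Fact) : CTree :=
  ⟨{[]}, fun v => if v = [] then I0 else ∅, []⟩

/-- A propagation step (of one side fact from the recently updated node to its parent)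
is applicable. -/
def Propagable (S' : Finset ℕ) (T : CTree) : Prop :=
  T.recent ≠ [] ∧ ∃ F ∈ T.lbl T.recent, F.rel ∈ S' ∧
    F ∉ T.lbl T.recent.dropLast ∧ F.vars ⊆ adomF (T.lbl T.recent.dropLast)

/-- One step of the principal-exempt one-pass chase for GTGDs `Th` strongly obeying
side signature `S'`. All steps apply at the recently updated node; chase steps are only
allowed when no propagation step applies; only side facts are inherited by new nodes. -/
inductive PEStep (Th : Finset TGD) (S' : Finset ℕ) : CTree → CTree → Prop
  /-- Propagation step: copy exactly one side fact to the parent (which must guard it and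
  not already contain it); the parent becomes recently updated. -/
  | prop (T : CTree) (F : Fact)
      (hrec : T.recent ∈ T.nodes) (hnr : T.recent ≠ [])
      (hF : F ∈ T.lbl T.recent) (hside : F.rel ∈ S')
      (hnew : F ∉ T.lbl T.recent.dropLast)
      (hgd : F.vars ⊆ adomF (T.lbl T.recent.dropLast)) :
      PEStep Th S' T
        ⟨T.nodes,
         Function.update T.lbl T.recent.dropLast
           (insert F (T.lbl T.recent.dropLast)),
         T.recent.dropLast⟩
  /-- Chase step with a full side GTGD: add the derived fact (which must be new in the
  underlying instance) to the recently updated node. -/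
  | fullSide (T : CTree) (τ : TGD) (σ : ℕ → ℕ)
      (hnp : ¬ Propagable S' T)
      (hτ : τ ∈ Th) (hfull : τ.isFull) (hside : τ.head.rel ∈ S')
      (htrig : ∀ A ∈ τ.body, A.rename σ ∈ T.lbl T.recent)
      (hnew : τ.head.rename σ ∉ T.facts) :
      PEStep Th S' T
        ⟨T.nodes,
         Function.update T.lbl T.recent (insert (τ.head.rename σ) (T.lbl T.recent)),
         T.recent⟩
  /-- Chase step with a non-full GTGD: create a fresh child of the recently updated node,
  containing the instantiated head (with fresh nulls for the existential variables)
  together with inherited side facts of the parent guarded by the new fact. -/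
  | nonfull (T : CTree) (τ : TGD) (σ σ' : ℕ → ℕ) (k : ℕ) (inh : Finset Fact)
      (hnp : ¬ Propagable S' T)
      (hτ : τ ∈ Th) (hnf : ¬ τ.isFull)
      (htrig : ∀ A ∈ τ.body, A.rename σ ∈ T.lbl T.recent)
      (hext : ∀ x ∈ τ.bodyVars, σ' x = σ x)
      (hfresh : ∀ y ∈ τ.existVars, σ' y ∉ T.adom)
      (hinj : Set.InjOn σ' ↑τ.existVars)
      (hnewnode : (T.recent ++ [k]) ∉ T.nodes)
      (hinh : inh ⊆ T.lbl T.recent)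
      (hinhside : ∀ F ∈ inh, F.rel ∈ S' ∧ F.vars ⊆ (τ.head.rename σ').vars) :
      PEStep Th S' T
        ⟨insert (T.recent ++ [k]) T.nodes,
         Function.update T.lbl (T.recent ++ [k]) (insert (τ.head.rename σ') inh),
         T.recent ++ [k]⟩
  /-- Relaxed chase step with a full principal TGD: create a fresh child of the
  recently updated node, containing the instantiated head together with inherited side
  facts of the parent guarded by it (no fresh value is introduced). -/
  | relaxed (T : CTree) (τ : TGD) (σ : ℕ → ℕ) (k : ℕ) (inh : Finset Fact)
      (hnp : ¬ Propagable S' T)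
      (hτ : τ ∈ Th) (hfull : τ.isFull) (hprin : τ.head.rel ∉ S')
      (htrig : ∀ A ∈ τ.body, A.rename σ ∈ T.lbl T.recent)
      (hnewnode : (T.recent ++ [k]) ∉ T.nodes)
      (hinh : inh ⊆ T.lbl T.recent)
      (hinhside : ∀ F ∈ inh, F.rel ∈ S' ∧ F.vars ⊆ (τ.head.rename σ).vars) :
      PEStep Th S' T
        ⟨insert (T.recent ++ [k]) T.nodes,
         Function.update T.lbl (T.recent ++ [k]) (insert (τ.head.rename σ) inh),
         T.recent ++ [k]⟩

/-- A principal-exempt one-pass tree-like chase proof of the fact `F` from `I0` and `Th`: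
a sequence of principal-exempt one-pass chase steps from the initial tree on `I0`,
ending in a tree containing `F` in some node. -/
def PEProof (I0 : Finset Fact) (Th : Finset TGD) (S' : Finset ℕ) (F : Fact) : Prop :=
  ∃ T : CTree, Relation.ReflTransGen (PEStep Th S') (initTree I0) T ∧ F ∈ T.facts

/-! ## The shortcut chase -/

/-- A tree of (possibly infinite) sets of facts, used for the shortcut chase. -/
structure SCTree where
  nodes : Finset (List ℕ)
  lbl : List ℕ → Set Fact

/-- The underlying instance of a shortcut chase tree. -/
def SCTree.facts (T : SCTree) : Set Fact := { F | ∃ v ∈ T.nodes, F ∈ T.lbl v }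

/-- Closure of a set of facts under the full TGDs of a finite set `Th'`. -/
def fullClosure (Th' : Finset TGD) (X : Set Fact) : Set Fact :=
  { F | ∀ J : Set Fact, X ⊆ J → (∀ τ ∈ Th', τ.isFull → τ.holdsIn J) → F ∈ J }

/-- Closure of a set of facts under the full TGDs of a family `R` of TGDs. -/
def fullClosureP (R : TGD → Prop) (X : Set Fact) : Set Fact :=
  { F | ∀ J : Set Fact, X ⊆ J → (∀ τ, R τ → τ.isFull → τ.holdsIn J) → F ∈ J }

/-- The initial shortcut chase tree on instance `I`. -/
def initSC (I : Finset Fact) : SCTree :=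
  ⟨{[]}, fun v => if v = [] then ↑I else ∅⟩

/-- A step of the shortcut chase based on the saturation `Th'`: fire a non-full GTGD of
`Th` at a node, creating a fresh child containing the new fact (with fresh nulls),
all facts of the parent guarded by it, and (full saturation step) all consequences of
the full GTGDs of `Th'`. There are no propagation steps. -/
inductive SCStep (Th Th' : Finset TGD) : SCTree → SCTree → Prop
  | step (T : SCTree) (g : List ℕ) (τ : TGD) (σ σ' : ℕ → ℕ) (k : ℕ)
      (hg : g ∈ T.nodes) (hτ : τ ∈ Th) (hnf : ¬ τ.isFull)
      (htrig : ∀ A ∈ τ.body, A.rename σ ∈ T.lbl g)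
      (hext : ∀ x ∈ τ.bodyVars, σ' x = σ x)
      (hfresh : ∀ y ∈ τ.existVars, ∀ u ∈ T.nodes, ∀ F ∈ T.lbl u, σ' y ∉ F.vars)
      (hinj : Set.InjOn σ' ↑τ.existVars)
      (hnew : (g ++ [k]) ∉ T.nodes) :
      SCStep Th Th' T
        ⟨insert (g ++ [k]) T.nodes,
         Function.update T.lbl (g ++ [k])
           (fullClosure Th'
             (insert (τ.head.rename σ')
               { F | F ∈ T.lbl g ∧ F.vars ⊆ (τ.head.rename σ').vars }))⟩

/-! ## The tree-like chase for linear TGDs, tight matches -/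

/-- A tree-like chase for linear TGDs: the root `[]` implicitly holds the initial
instance; each non-root node holds exactly one fact `fct v` and records the rule
`rule v` used to create it. -/
structure LinChase where
  nodes : Finset (List ℕ)
  fct : List ℕ → Fact
  rule : List ℕ → TGD

/-- Validity of a linear chase tree for initial instance `I0` and linear TGDs `Th`:
each non-root node is created by firing its rule on the fact of its parent (or a fact of
`I0` for children of the root), with fresh distinct nulls for existential variables. -/
def LinChase.valid (C : LinChase) (I0 : Finset Fact) (Th : Finset TGD) : Prop :=
  [] ∈ C.nodes ∧ (∀ v ∈ C.nodes, ∀ u : List ℕ, u <+: v → u ∈ C.nodes) ∧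
  ∀ v ∈ C.nodes, v ≠ [] →
    C.rule v ∈ Th ∧
    ∃ B : Atom, ∃ σ : ℕ → ℕ, (C.rule v).body = [B] ∧
      (v.dropLast = [] → B.rename σ ∈ I0) ∧
      (v.dropLast ≠ [] → B.rename σ = C.fct v.dropLast) ∧
      C.fct v = (C.rule v).head.rename σ ∧
      Set.InjOn σ ↑(C.rule v).existVars ∧
      ∀ y ∈ (C.rule v).existVars,
        σ y ∉ adomF I0 ∧ ∀ u ∈ C.nodes, ¬ v <+: u → σ y ∉ (C.fct u).vars

/-- All facts of a linear chase tree, including the initial instance. -/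
def LinChase.allFacts (C : LinChase) (I0 : Finset Fact) : Set Fact :=
  ↑I0 ∪ { F | ∃ v ∈ C.nodes, v ≠ [] ∧ F = C.fct v }

/-- A match of the CQ `Q` in the linear chase tree. -/
def LinChase.isMatch (C : LinChase) (I0 : Finset Fact) (σ : ℕ → ℕ) (Q : CQ) : Prop :=
  ∀ A ∈ Q, A.rename σ ∈ C.allFacts I0

/-- Longest common prefix of two lists: the least common ancestor of two tree nodes. -/
def lcp : List ℕ → List ℕ → List ℕ
  | a :: as, b :: bs => if a = b then a :: lcp as bs else []
  | _, _ => []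

/-- The nodes of the chase tree containing an image fact of the match. -/
def imageNodes (C : LinChase) (σ : ℕ → ℕ) (Q : CQ) : Set (List ℕ) :=
  { v | v ∈ C.nodes ∧ v ≠ [] ∧ ∃ A ∈ Q, A.rename σ = C.fct v }

/-- The augmented image of a match: the closure of its image under least common
ancestors, together with the root. -/
def augImage (C : LinChase) (σ : ℕ → ℕ) (Q : CQ) : Set (List ℕ) :=
  {[]} ∪ imageNodes C σ Q ∪
    { u | ∃ v ∈ imageNodes C σ Q, ∃ w ∈ imageNodes C σ Q, u = lcp v w }

/-- `n` is the image parent of `n'`: the lowest strict ancestor of `n'` within the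
augmented image. -/
def imageParent (S : Set (List ℕ)) (n n' : List ℕ) : Prop :=
  n ∈ S ∧ n' ∈ S ∧ n <+: n' ∧ n ≠ n' ∧
    ∀ m ∈ S, n <+: m → m <+: n' → (m = n ∨ m = n')

/-- Nodes `n` (an ancestor) and `n'` are far apart: between them lie two distinct
generated facts produced by the same rule, with the same equality pattern between
positions, and sharing values only at identical positions. -/
def farApart (C : LinChase) (n n' : List ℕ) : Prop :=
  ∃ n1 ∈ C.nodes, ∃ n2 ∈ C.nodes, n1 ≠ [] ∧ n2 ≠ [] ∧ n1 ≠ n2 ∧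
    n <+: n1 ∧ n1 <+: n2 ∧ n2 <+: n' ∧
    C.fct n1 ≠ C.fct n2 ∧ C.rule n1 = C.rule n2 ∧
    (∀ i j : ℕ, ((C.fct n1).args[i]? = (C.fct n1).args[j]? ↔
      (C.fct n2).args[i]? = (C.fct n2).args[j]?)) ∧
    (∀ a : ℕ, a ∈ (C.fct n1).args → a ∈ (C.fct n2).args →
      ∀ i : ℕ, ((C.fct n1).args[i]? = some a ↔ (C.fct n2).args[i]? = some a))

/-- A tight match: every node of the augmented image is near its image parent. -/
def tightMatch (C : LinChase) (σ : ℕ → ℕ) (Q : CQ) : Prop :=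
  ∀ n n', imageParent (augImage C σ Q) n n' → ¬ farApart C n n'


/-! ## Linearization -/

/-- Canonical childish instances: well-formed childish instances whose active domain is
contained in `{0, …, arity(Sg) - 1}` (one representative per isomorphism type). -/
def canonChildish (Sg : Sig) (S' : Finset ℕ) (Th : Finset TGD) (w : ℕ) :
    Set (Finset Fact) :=
  { S | childish Th S' w S ∧ (∀ F ∈ S, Sg.wfAtom F) ∧ adomF S ⊆ Finset.range Sg.arity }

/-- The marked elements of a childish instance with principal fact `P`: the active domain
of its side part. -/
def markedElems (S : Finset Fact) (P : Fact) : Finset ℕ := adomF (S.erase P)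

/-- A homomorphism from the marked elements of `S` (with principal fact `P`) to
themselves, extended as the identity elsewhere. -/
def markedHom (S : Finset Fact) (P : Fact) (h : ℕ → ℕ) : Prop :=
  (∀ x ∈ markedElems S P, h x ∈ markedElems S P) ∧ ∀ x, x ∉ markedElems S P → h x = x

/-- The closure `S*` of `h(S)` under the full TGDs of the `S'`-suitable saturation of
`Th`. -/
def satClosure (Sg : Sig) (S' : Finset ℕ) (Th : Finset TGD) (w : ℕ)
    (S : Finset Fact) (h : ℕ → ℕ) : Set Fact :=
  fullClosureP (Sat Sg S' Th w) ((Atom.rename h) '' ↑S)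

/-- The (Instantiate) rules of `Linearize(Σ)`: for every canonical childish instance `S`
with principal fact `P`, marked homomorphism `h`, and fact `F` of the closure `S*` of
`h(S)`, the full linear TGD `R_S(h(x⃗)) → F`. The fresh relation `R_S` is named by the
injection `ρ`. -/
def instantiateRules (Sg : Sig) (S' : Finset ℕ) (Th : Finset TGD) (w : ℕ)
    (ρ : Finset Fact → ℕ) : Set TGD :=
  { τ | ∃ S ∈ canonChildish Sg S' Th w, ∃ P ∈ S, P.rel ∉ S' ∧
        ∃ h : ℕ → ℕ, markedHom S P h ∧
        ∃ F ∈ satClosure Sg S' Th w S h,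
          τ = ⟨[⟨ρ S, P.args.map h⟩], F⟩ }

/-- The (Lift) rules of `Linearize(Σ)`: for every canonical childish instance `S` with
principal fact `P`, marked homomorphism `h` with closure `S*`, non-full GTGD `δ` of `Th`
and match `h'` of the body of `δ` in `S*`, extended with fresh distinct values `σ` for
the existential variables of `δ`, the linear TGD `R_S(h(x⃗)) → ∃ w⃗ R_{S''}(h'(z⃗), w⃗)`
where `S''` is the canonical childish instance isomorphic (via `g`) to the instance made
of the instantiated head of `δ` together with the facts of `S*` using only elements of
`h'(z⃗)` for `z⃗` the exported variables of `δ`. -/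
def liftRules (Sg : Sig) (S' : Finset ℕ) (Th : Finset TGD) (w : ℕ)
    (ρ : Finset Fact → ℕ) : Set TGD :=
  { τ | ∃ S ∈ canonChildish Sg S' Th w, ∃ P ∈ S, P.rel ∉ S' ∧
        ∃ h : ℕ → ℕ, markedHom S P h ∧
        ∃ δ ∈ Th, ¬ δ.isFull ∧
        ∃ h' σ : ℕ → ℕ,
          (∀ A ∈ δ.body, A.rename h' ∈ satClosure Sg S' Th w S h) ∧
          (∀ x ∈ δ.bodyVars, σ x = h' x) ∧
          Set.InjOn σ ↑δ.existVars ∧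
          (∀ y ∈ δ.existVars, ∀ G ∈ satClosure Sg S' Th w S h, σ y ∉ G.vars) ∧
        ∃ S'' ∈ canonChildish Sg S' Th w, ∃ P'' ∈ S'', P''.rel ∉ S' ∧
        ∃ g : ℕ → ℕ, Set.InjOn g ↑(adomF S'') ∧
          P''.rename g = δ.head.rename σ ∧
          (Atom.rename g) '' ↑S'' =
            insert (δ.head.rename σ)
              { G | G ∈ satClosure Sg S' Th w S h ∧
                    G.vars ⊆ Finset.image h' δ.exported } ∧
          τ = ⟨[⟨ρ S, P.args.map h⟩], ⟨ρ S'', P''.args.map g⟩⟩ }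

/-- `Linearize(Σ)`: the linear TGDs produced by the rules (Instantiate) and (Lift). -/
def linearize (Sg : Sig) (S' : Finset ℕ) (Th : Finset TGD) (w : ℕ)
    (ρ : Finset Fact → ℕ) : Set TGD :=
  instantiateRules Sg S' Th w ρ ∪ liftRules Sg S' Th w ρ

/-- The instance `I^Lin`: `I` together with, for every principal fact `F` of `I` and
every set of at most `w` elements of `F`, the fact `R_S(a⃗)` for `S` the canonical
representative of the childish instance made of `F` and the side facts of `I` on the
chosen elements. -/
def ILin (Sg : Sig) (S' : Finset ℕ) (Th : Finset TGD) (w : ℕ)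
    (ρ : Finset Fact → ℕ) (I : Finset Fact) : Set Fact :=
  ↑I ∪ { G | ∃ F ∈ I, F.rel ∉ S' ∧ ∃ Ps : Finset ℕ, Ps ⊆ F.vars ∧ Ps.card ≤ w ∧
        ∃ S0 ∈ canonChildish Sg S' Th w, ∃ P0 ∈ S0, P0.rel ∉ S' ∧
        ∃ g : ℕ → ℕ, Set.InjOn g ↑(adomF S0) ∧ P0.rename g = F ∧
          (Atom.rename g) '' ↑S0 =
            insert F { H | H ∈ I ∧ H.rel ∈ S' ∧ H.vars ⊆ Ps } ∧
        G = ⟨ρ S0, P0.args.map g⟩ }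


/-! ## Multi-headed TGDs and TGDs with constants -/

/-- An atom possibly containing constants: arguments are either variables (`.inl`) or
constants (`.inr`). -/
structure CAtom where
  rel : ℕ
  args : List (ℕ ⊕ ℕ)
deriving DecidableEq

/-- The variables of an atom with constants. -/
def CAtom.vars (A : CAtom) : Finset ℕ := (A.args.filterMap Sum.getLeft?).toFinset

/-- Whether an atom with constants is actually constant-free. -/
def CAtom.constantFree (A : CAtom) : Prop := ∀ t ∈ A.args, t.isLeft

/-- Instantiate an atom with constants by a variable assignment (constants denote
themselves). -/
def CAtom.inst (σ : ℕ → ℕ) (A : CAtom) : Fact := ⟨A.rel, A.args.map (Sum.elim σ id)⟩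

def Sig.wfCAtom (S : Sig) (A : CAtom) : Prop := A.rel ∈ S.rels ∧ A.args.length = S.ar A.rel

/-- A multi-headed TGD with constants: body and head are conjunctions of atoms which may
contain constants. -/
structure MTGD where
  body : List CAtom
  head : List CAtom
deriving DecidableEq

def MTGD.bodyVars (τ : MTGD) : Finset ℕ := τ.body.foldr (fun A s => A.vars ∪ s) ∅

/-- A multi-headed TGD is guarded when some body atom contains all body variables. -/
def MTGD.guarded (τ : MTGD) : Prop := ∃ A ∈ τ.body, τ.bodyVars ⊆ A.vars

/-- A multi-headed GTGD obeys side signature `S'`. -/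
def MTGD.obeys (τ : MTGD) (S' : Finset ℕ) : Prop :=
  ∃ A, (A ∈ τ.body ∧ τ.bodyVars ⊆ A.vars) ∧ ∀ B ∈ τ.body, B = A ∨ B.rel ∈ S'

def MTGD.holdsIn (τ : MTGD) (I : Set Fact) : Prop :=
  ∀ σ : ℕ → ℕ, (∀ A ∈ τ.body, A.inst σ ∈ I) →
    ∃ σ' : ℕ → ℕ, (∀ v ∈ τ.bodyVars, σ' v = σ v) ∧ ∀ A ∈ τ.head, A.inst σ' ∈ I

def Sig.wfMTGD (S : Sig) (τ : MTGD) : Prop :=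
  (∀ A ∈ τ.body, S.wfCAtom A) ∧ (∀ A ∈ τ.head, S.wfCAtom A)

/-- A single-headed TGD with constants. -/
structure CTGD where
  body : List CAtom
  head : CAtom
deriving DecidableEq

def CTGD.bodyVars (τ : CTGD) : Finset ℕ := τ.body.foldr (fun A s => A.vars ∪ s) ∅

def CTGD.guarded (τ : CTGD) : Prop := ∃ A ∈ τ.body, τ.bodyVars ⊆ A.vars

def CTGD.obeys (τ : CTGD) (S' : Finset ℕ) : Prop :=
  ∃ A, (A ∈ τ.body ∧ τ.bodyVars ⊆ A.vars) ∧ ∀ B ∈ τ.body, B = A ∨ B.rel ∈ S'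

def CTGD.holdsIn (τ : CTGD) (I : Set Fact) : Prop :=
  ∀ σ : ℕ → ℕ, (∀ A ∈ τ.body, A.inst σ ∈ I) →
    ∃ σ' : ℕ → ℕ, (∀ v ∈ τ.bodyVars, σ' v = σ v) ∧ τ.head.inst σ' ∈ I

def Sig.wfCTGD (S : Sig) (τ : CTGD) : Prop :=
  (∀ A ∈ τ.body, S.wfCAtom A) ∧ S.wfCAtom τ.head

/-- A conjunctive query possibly containing constants. -/
abbrev CCQ := List CAtom

def CCQholds (Q : CCQ) (I : Set Fact) : Prop := ∃ σ : ℕ → ℕ, ∀ A ∈ Q, A.inst σ ∈ I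

/-- OWQA entailment for multi-headed TGDs with constants. -/
def entailsQM (I0 : Finset Fact) (Th : Finset MTGD) (Q : CCQ) : Prop :=
  ∀ J : Set Fact, ↑I0 ⊆ J → (∀ τ ∈ Th, τ.holdsIn J) → CCQholds Q J

/-- OWQA entailment for single-headed TGDs with constants. -/
def entailsQC (I0 : Finset Fact) (Th : Finset CTGD) (Q : CCQ) : Prop :=
  ∀ J : Set Fact, ↑I0 ⊆ J → (∀ τ ∈ Th, τ.holdsIn J) → CCQholds Q J

/-- A constant-free atom viewed as an atom with constants. -/
def Atom.toCAtom (A : Atom) : CAtom := ⟨A.rel, A.args.map Sum.inl⟩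


/-! ## Encodings and machine-based complexity -/

/-- The identity finite encoding of bit strings. -/
def boolListEnc : Computability.Encoding (List Bool) Bool where
  encode := id
  decode := fun l => some l
  decode_encode := fun _ => rfl

/-- Self-delimiting encoding of a natural number as a bit string. -/
def encNat (n : ℕ) : List Bool := List.replicate n true ++ [false]

/-- Encoding of a list as a bit string, given an encoding of its elements. -/
def encListBy {α : Type} (f : α → List Bool) (l : List α) : List Bool :=
  encNat l.length ++ l.foldr (fun a r => f a ++ r) []

def encAtom (A : Atom) : List Bool := encNat A.rel ++ encListBy encNat A.args

def encFact : Fact → List Bool := encAtom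

def encTGD (τ : TGD) : List Bool := encListBy encAtom τ.body ++ encAtom τ.head

def encCQ (Q : CQ) : List Bool := encListBy encAtom Q

def encSum (t : ℕ ⊕ ℕ) : List Bool :=
  match t with
  | .inl v => true :: encNat v
  | .inr c => false :: encNat c

def encCAtom (A : CAtom) : List Bool := encNat A.rel ++ encListBy encSum A.args

def encMTGD (τ : MTGD) : List Bool := encListBy encCAtom τ.body ++ encListBy encCAtom τ.head

def encCTGD (τ : CTGD) : List Bool := encListBy encCAtom τ.body ++ encCAtom τ.head

/-- Encoding of a signature given as a list of (relation, arity) pairs. -/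
def encSigL (l : List (ℕ × ℕ)) : List Bool :=
  encListBy (fun p => encNat p.1 ++ encNat p.2) l

/-- Encoding of an OWQA input: an instance, a set of TGDs, and a CQ. -/
def encOWQA (I0 : List Fact) (Th : List TGD) (Q : CQ) : List Bool :=
  encListBy encFact I0 ++ encListBy encTGD Th ++ encCQ Q

/-- Pairing of an input string with a certificate string. -/
def pairCode (u v : List Bool) : List Bool := encNat u.length ++ u ++ v

/-- The signature described by a list of (relation, arity) pairs. -/
def sigOf (l : List (ℕ × ℕ)) : Sig :=
  ⟨(l.map Prod.fst).toFinset, fun r => ((l.lookup r).getD 0)⟩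

/-- `f` is computed by a deterministic Turing machine within time `T` (as a function of
the input length). -/
def ComputedInTime (f : List Bool → Bool) (T : ℕ → ℕ) : Prop :=
  ∃ c : Turing.TM2ComputableInTime boolListEnc.encode Computability.encodingBoolBool.encode f,
    ∀ n, c.time n ≤ T n

/-- The machine `M` (with bit-string input and output alphabets), started on input `x`,
halts with output `y` within `m` steps. -/
def OutputsInSteps (M : Turing.TM2ComputableAux Bool Bool) (x y : List Bool) (m : ℕ) :
    Prop :=
  Nonempty (Turing.TM2OutputsInTime M.tm (x.map M.inputAlphabet.invFun)
    (some (y.map M.outputAlphabet.invFun)) m)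






/-! ### Auxiliary lemmas for the tight-match theorem -/

section TightAux

open List

private lemma GT_prefix_dropLast {u v : List ℕ} (h : u <+: v) (hne : u ≠ v) :
    u <+: v.dropLast := by
  obtain ⟨t, rfl⟩ := h
  cases t with
  | nil => simp at hne
  | cons a s =>
    rw [List.dropLast_append_cons]
    exact ⟨(a :: s).dropLast, rfl⟩

private lemma GT_prefix_antisymm {u v : List ℕ} (h1 : u <+: v) (h2 : v <+: u) : u = v :=
  h1.eq_of_length (le_antisymm h1.length_le h2.length_le)

private lemma GT_prefix_append_cases {w a b : List ℕ} (h : w <+: a ++ b) :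
    w <+: a ∨ ∃ b', b' <+: b ∧ w = a ++ b' := by
  rcases le_or_gt w.length a.length with hle | hlt
  · exact Or.inl (List.prefix_of_prefix_length_le h (List.prefix_append a b) hle)
  · right
    have ha : a <+: w :=
      List.prefix_of_prefix_length_le (List.prefix_append a b) h (le_of_lt hlt)
    obtain ⟨t, rfl⟩ := ha
    obtain ⟨t2, ht2⟩ := h
    rw [List.append_assoc] at ht2
    exact ⟨t, ⟨t2, List.append_cancel_left ht2⟩, rfl⟩

private lemma GT_lcp_prefix_left : ∀ x y : List ℕ, lcp x y <+: x := by
  intro x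
  induction x with
  | nil => intro y; cases y <;> simp [lcp]
  | cons a as ih =>
    intro y
    cases y with
    | nil => simp [lcp]
    | cons b bs =>
      by_cases h : a = b
      · subst h
        simpa [lcp] using ih bs
      · simp [lcp, h]

private lemma GT_lcp_prefix_right : ∀ x y : List ℕ, lcp x y <+: y := by
  intro x
  induction x with
  | nil => intro y; cases y <;> simp [lcp]
  | cons a as ih =>
    intro y
    cases y with
    | nil => simp [lcp]
    | cons b bs =>
      by_cases h : a = b
      · subst h
        simpa [lcp] using ih bs
      · simp [lcp, h]

private lemma GT_prefix_lcp : ∀ (c x y : List ℕ), c <+: x → c <+: y → c <+: lcp x y := by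
  intro c
  induction c with
  | nil => intro x y _ _; exact List.nil_prefix
  | cons a c' ih =>
    intro x y hx hy
    cases x with
    | nil => exact absurd (List.prefix_nil.mp hx) (by simp)
    | cons b x' =>
      cases y with
      | nil => exact absurd (List.prefix_nil.mp hy) (by simp)
      | cons d y' =>
        obtain ⟨rfl, hx'⟩ := List.cons_prefix_cons.mp hx
        obtain ⟨rfl, hy'⟩ := List.cons_prefix_cons.mp hy
        simpa [lcp] using ih x' y' hx' hy'

private lemma GT_foldr_max_mem {k : ℕ} : ∀ {l : List ℕ}, k ∈ l → k ≤ l.foldr max 0 := by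
  intro l
  induction l with
  | nil => intro h; simp at h
  | cons a t ih =>
    intro h
    rcases List.mem_cons.mp h with rfl | h
    · exact le_max_left _ _
    · exact le_trans (ih h) (le_max_right _ _)

private lemma GT_mem_vars {A : Atom} {a : ℕ} : a ∈ A.vars ↔ a ∈ A.args := by
  simp [Atom.vars]

private lemma GT_rename_comp (r s : ℕ → ℕ) (A : Atom) :
    (A.rename s).rename r = A.rename (fun x => r (s x)) := by
  simp [Atom.rename, List.map_map, Function.comp]

private lemma GT_vars_rename {r : ℕ → ℕ} {A : Atom} {a : ℕ} :
    a ∈ (A.rename r).vars ↔ ∃ x ∈ A.args, r x = a := by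
  simp [Atom.rename, Atom.vars]

private lemma GT_rename_eq_self {r : ℕ → ℕ} {A : Atom} (h : ∀ a ∈ A.args, r a = a) :
    A.rename r = A := by
  unfold Atom.rename
  cases A with
  | mk R args =>
    simp only
    congr 1
    calc args.map r = args.map id := List.map_congr_left h
      _ = args := List.map_id args

private lemma GT_bodyVars_single {τ : TGD} {B : Atom} (h : τ.body = [B]) :
    τ.bodyVars = B.vars := by
  simp [TGD.bodyVars, h]

private lemma GT_mem_adomF {I : Finset Fact} {a : ℕ} :
    a ∈ adomF I ↔ ∃ F ∈ I, a ∈ F.vars := by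
  simp [adomF]

/-- Chain lemma: every value at a strict descendant `v` of a node `b` either occurs in
the fact of `b`, or is a null introduced strictly below `b`. -/
private lemma GT_chain (C : LinChase) (I0 : Finset Fact) (Th : Finset TGD)
    (hC : C.valid I0 Th) (b : List ℕ) (hb : b ≠ []) :
    ∀ (n : ℕ) (v : List ℕ), v.length = n → v ∈ C.nodes → b <+: v → v ≠ b →
      ∀ a ∈ (C.fct v).vars, a ∈ (C.fct b).vars ∨
        ∃ p ∈ C.nodes, b <+: p ∧ p ≠ b ∧ p <+: v ∧ a ∉ adomF I0 ∧
          ∀ u ∈ C.nodes, ¬ p <+: u → a ∉ (C.fct u).vars := by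
  intro n
  induction n using Nat.strong_induction_on with
  | _ n ih =>
    intro v hvlen hv hbv hvb a ha
    have hvne : v ≠ [] := by
      intro h; subst h; exact hvb (List.prefix_nil.mp hbv).symm
    obtain ⟨hth, B, s, hbody, hI0s, hpar, hfct, hinj, hfresh⟩ := hC.2.2 v hv hvne
    rw [hfct] at ha
    obtain ⟨x, hx, hxa⟩ := GT_vars_rename.mp ha
    by_cases hxb : x ∈ (C.rule v).bodyVars
    · -- exported value: comes from the parent's fact
      rw [GT_bodyVars_single hbody, GT_mem_vars] at hxb
      have haB : a ∈ (B.rename s).vars := GT_vars_rename.mpr ⟨x, hxb, hxa⟩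
      have hpd : v.dropLast ∈ C.nodes := hC.2.1 v hv _ (List.dropLast_prefix v)
      have hbd : b <+: v.dropLast := GT_prefix_dropLast hbv (Ne.symm hvb)
      have hdne : v.dropLast ≠ [] := by
        intro h; rw [h] at hbd; exact hb (List.prefix_nil.mp hbd)
      rw [hpar hdne] at haB
      by_cases hdb : v.dropLast = b
      · rw [hdb] at haB; exact Or.inl haB
      · have hlt : v.dropLast.length < n := by
          rw [← hvlen]
          have : v.dropLast.length + 1 = v.length := by
            rw [List.length_dropLast]
            have : 0 < v.length := List.length_pos_iff.mpr hvne
            omega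
          omega
        rcases ih _ hlt v.dropLast rfl hpd hbd hdb a haB with h | ⟨p, hp, h1, h2, h3, h4, h5⟩
        · exact Or.inl h
        · exact Or.inr ⟨p, hp, h1, h2, h3.trans (List.dropLast_prefix v), h4, h5⟩
    · -- fresh null introduced at v
      have hxe : x ∈ (C.rule v).existVars := by
        have : x ∈ (C.rule v).head.vars := by
          rw [GT_mem_vars]; exact hx
        exact Finset.mem_sdiff.mpr ⟨this, hxb⟩
      obtain ⟨h1, h2⟩ := hfresh x hxe
      exact Or.inr ⟨v, hv, hbv, hvb, List.prefix_refl v, hxa ▸ h1,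
        fun u hu hpu => hxa ▸ h2 u hu hpu⟩

end TightAux


/-- Shrinking step: a non-tight match can be turned into a match in a strictly smaller
valid chase tree. -/
private lemma GT_shrink (I0 : Finset Fact) (Th : Finset TGD) (C : LinChase)
    (hC : C.valid I0 Th) (Q : CQ) (σ : ℕ → ℕ) (hm : C.isMatch I0 σ Q)
    (hnt : ¬ tightMatch C σ Q) :
    ∃ (C2 : LinChase) (σ2 : ℕ → ℕ), C2.valid I0 Th ∧ C2.isMatch I0 σ2 Q ∧
      C2.nodes.card < C.nodes.card := by
  classical
  rw [tightMatch] at hnt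
  push_neg at hnt
  obtain ⟨n, n', hIP, hFA⟩ := hnt
  obtain ⟨hnS, hn'S, hnn', hnen', hmin⟩ := hIP
  obtain ⟨n1, hn1, n2, hn2, h1ne, h2ne, h12ne, hpn1, hp12, hp2n', hfne, hrule, hpat, hshare⟩ := hFA
  -- basic length facts
  have hL12 : n1.length < n2.length := by
    rcases lt_or_eq_of_le hp12.length_le with h | h
    · exact h
    · exact absurd (hp12.eq_of_length h) h12ne
  have hn2n1 : ¬ n2 <+: n1 := fun h => by
    have := h.length_le; omega
  -- the two facts have argument lists of the same length
  have hlen : (C.fct n1).args.length = (C.fct n2).args.length := by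
    by_contra hne
    have h := hpat (C.fct n1).args.length (C.fct n2).args.length
    rcases Nat.lt_or_ge (C.fct n1).args.length (C.fct n2).args.length with hlt | hge
    · have e1 : (C.fct n1).args[(C.fct n1).args.length]? = none := by simp
      have e2 : (C.fct n1).args[(C.fct n2).args.length]? = none := by
        rw [List.getElem?_eq_none_iff]; omega
      have h2 := h.mp (by rw [e1, e2])
      rw [List.getElem?_eq_none_iff.mpr (le_refl _)] at h2
      have := List.getElem?_eq_none_iff.mp h2
      omega
    · rcases Nat.lt_or_ge (C.fct n2).args.length (C.fct n1).args.length with hlt2 | hge2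
      · have e1 : (C.fct n2).args[(C.fct n2).args.length]? = none := by simp
        have e2 : (C.fct n2).args[(C.fct n1).args.length]? = none := by
          rw [List.getElem?_eq_none_iff]; omega
        have h2 := h.mpr (by rw [e1, e2])
        rw [List.getElem?_eq_none_iff.mpr (le_refl _)] at h2
        have := List.getElem?_eq_none_iff.mp h2.symm
        omega
      · omega
  -- the renaming r sending the fact of n2 onto the fact of n1
  set r : ℕ → ℕ := fun a =>
    if h : a ∈ (C.fct n2).args then
      (C.fct n1).args.getD ((C.fct n2).args.idxOf a) 0
    else a with hrdef
  have hidxsome : ∀ a ∈ (C.fct n2).args,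
      (C.fct n2).args[(C.fct n2).args.idxOf a]? = some a := by
    intro a ha
    have h := List.idxOf_lt_length_iff.mpr ha
    rw [List.getElem?_eq_getElem h]
    exact congrArg some (List.getElem_idxOf h)
  have hK1 : ∀ (i : ℕ) (a : ℕ), (C.fct n2).args[i]? = some a →
      (C.fct n1).args[i]? = some (r a) := by
    intro i a hia
    have ha := List.mem_of_getElem? hia
    have h1 : (C.fct n1).args[(C.fct n2).args.idxOf a]? = (C.fct n1).args[i]? :=
      (hpat _ i).mpr ((hidxsome a ha).trans hia.symm)
    have hlt : (C.fct n2).args.idxOf a < (C.fct n1).args.length := by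
      rw [hlen]; exact List.idxOf_lt_length_iff.mpr ha
    have h2 : (C.fct n1).args[(C.fct n2).args.idxOf a]? = some (r a) := by
      rw [List.getElem?_eq_getElem hlt]
      have : r a = (C.fct n1).args.getD ((C.fct n2).args.idxOf a) 0 := by
        rw [hrdef]; exact dif_pos ha
      rw [this, List.getD_eq_getElem?_getD, List.getElem?_eq_getElem hlt]
      rfl
    rw [← h1]; exact h2
  have hK1mem : ∀ a ∈ (C.fct n2).args, r a ∈ (C.fct n1).args := by
    intro a ha
    exact List.mem_of_getElem? (hK1 _ a (hidxsome a ha))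
  have hK3 : ∀ a, a ∈ (C.fct n1).args → a ∈ (C.fct n2).args → r a = a := by
    intro a h1 h2
    have hsh := (hshare a h1 h2 ((C.fct n2).args.idxOf a)).mpr (hidxsome a h2)
    have : r a = (C.fct n1).args.getD ((C.fct n2).args.idxOf a) 0 := by
      rw [hrdef]; exact dif_pos h2
    rw [this, List.getD_eq_getElem?_getD, hsh]
    rfl
  have hK4 : ∀ a, a ∉ (C.fct n2).args → r a = a := by
    intro a ha; rw [hrdef]; exact dif_neg ha
  -- r maps the fact of n2 to the fact of n1
  obtain ⟨hth1, B1, s1, hb1, hI01, hpar1, hfct1, hinj1, hfr1⟩ := hC.2.2 n1 hn1 h1ne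
  obtain ⟨hth2, B2, s2, hb2, hI02, hpar2, hfct2n, hinj2, hfr2⟩ := hC.2.2 n2 hn2 h2ne
  have hrel : (C.fct n1).rel = (C.fct n2).rel := by
    rw [hfct1, hfct2n, hrule]
    rfl
  have hK2 : Atom.rename r (C.fct n2) = C.fct n1 := by
    have hargs : (C.fct n2).args.map r = (C.fct n1).args := by
      apply List.ext_getElem?
      intro i
      rw [List.getElem?_map]
      cases h2i : (C.fct n2).args[i]? with
      | none =>
        have : (C.fct n1).args.length ≤ i := by
          rw [hlen]; exact List.getElem?_eq_none_iff.mp h2i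
        simp [List.getElem?_eq_none_iff.mpr this]
      | some a => simp [hK1 i a h2i]
    show (⟨(C.fct n2).rel, (C.fct n2).args.map r⟩ : Atom) = C.fct n1
    rw [hargs, ← hrel]
  -- analysis of variables of r-renamed facts
  have hRvars : ∀ (G : Atom) (y : ℕ), y ∈ (Atom.rename r G).vars →
      (y ∈ G.vars ∧ y ∉ (C.fct n2).vars) ∨ y ∈ (C.fct n1).vars := by
    intro G y h
    obtain ⟨a, ha, rfl⟩ := GT_vars_rename.mp h
    by_cases haF2 : a ∈ (C.fct n2).args
    · exact Or.inr (GT_mem_vars.mpr (hK1mem a haF2))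
    · rw [hK4 a haF2]
      exact Or.inl ⟨GT_mem_vars.mpr ha, fun hc => haF2 (GT_mem_vars.mp hc)⟩
  have hid2 : ∀ (G : Atom), (∀ a, a ∈ G.args → a ∈ (C.fct n2).args → r a = a) →
      Atom.rename r G = G := by
    intro G h
    refine GT_rename_eq_self (fun a ha => ?_)
    by_cases h2 : a ∈ (C.fct n2).args
    · exact h a ha h2
    · exact hK4 a h2
  -- the chain analysis of values of the fact of n2
  have hF2chain : ∀ a ∈ (C.fct n2).args, a ∈ (C.fct n1).args ∨
      ∃ p ∈ C.nodes, n1 <+: p ∧ p ≠ n1 ∧ p <+: n2 ∧ a ∉ adomF I0 ∧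
        ∀ u ∈ C.nodes, ¬ p <+: u → a ∉ (C.fct u).vars := by
    intro a ha
    rcases GT_chain C I0 Th hC n1 h1ne n2.length n2 rfl hn2 hp12 (Ne.symm h12ne) a
      (GT_mem_vars.mpr ha) with h | h
    · exact Or.inl (GT_mem_vars.mp h)
    · exact Or.inr h
  -- fresh index bound
  set N : ℕ := (C.nodes.sup fun l => l.foldr max 0) + 1 with hNdef
  have hcomp : ∀ v ∈ C.nodes, ∀ k ∈ v, k < N := by
    intro v hv k hk
    have h1 : k ≤ v.foldr max 0 := GT_foldr_max_mem hk
    have h2 : v.foldr max 0 ≤ C.nodes.sup (fun l => l.foldr max 0) :=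
      Finset.le_sup hv
    omega
  -- the moved-subtree maps
  set φ : List ℕ → List ℕ :=
    fun v => n1 ++ ((v.drop n2.length).headI + N) :: (v.drop n2.length).tail with hphidef
  set cond : List ℕ → Prop :=
    fun u => n1 <+: u ∧ u.drop n1.length ≠ [] ∧ N ≤ (u.drop n1.length).headI with hconddef
  set ψ : List ℕ → List ℕ :=
    fun u => n2 ++ ((u.drop n1.length).headI - N) :: (u.drop n1.length).tail with hpsidef
  have hrep : ∀ v, n2 <+: v → v ≠ n2 → ∃ j s, v = n2 ++ j :: s := by
    intro v h hne
    obtain ⟨t, rfl⟩ := h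
    cases t with
    | nil => exact absurd (by simp) hne
    | cons j s => exact ⟨j, s, rfl⟩
  have hφval : ∀ (j : ℕ) (s : List ℕ), φ (n2 ++ j :: s) = n1 ++ (j + N) :: s := by
    intro j s
    rw [hphidef]
    simp [List.drop_left]
  have hcondval : ∀ (j : ℕ) (s : List ℕ), cond (n1 ++ (j + N) :: s) := by
    intro j s
    rw [hconddef]
    refine ⟨List.prefix_append _ _, ?_, ?_⟩ <;> simp [List.drop_left]
  have hψval : ∀ (j : ℕ) (s : List ℕ), ψ (n1 ++ (j + N) :: s) = n2 ++ j :: s := by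
    intro j s
    rw [hpsidef]
    simp [List.drop_left]
  have hcondold : ∀ u ∈ C.nodes, ¬ cond u := by
    intro u hu hcondu
    rw [hconddef] at hcondu
    obtain ⟨⟨t, rfl⟩, htne, hNle⟩ := hcondu
    rw [List.drop_left] at htne hNle
    cases t with
    | nil => exact htne rfl
    | cons k s =>
      have hk : k ∈ n1 ++ k :: s := by simp
      have := hcomp _ hu k hk
      simp only [List.headI] at hNle
      omega
  set nodes2 : Finset (List ℕ) :=
    (C.nodes.filter fun v => ¬ n2 <+: v) ∪
      ((C.nodes.filter fun v => n2 <+: v ∧ v ≠ n2).image φ) with hnodes2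
  set fct2 : List ℕ → Fact :=
    fun u => if cond u then Atom.rename r (C.fct (ψ u)) else C.fct u with hfct2def
  set rule2 : List ℕ → TGD :=
    fun u => if cond u then C.rule (ψ u) else C.rule u with hrule2def
  have hfct2old : ∀ u ∈ C.nodes, fct2 u = C.fct u := by
    intro u hu; rw [hfct2def]; exact if_neg (hcondold u hu)
  have hrule2old : ∀ u ∈ C.nodes, rule2 u = C.rule u := by
    intro u hu; rw [hrule2def]; exact if_neg (hcondold u hu)
  have hfct2new : ∀ (j : ℕ) (s : List ℕ),
      fct2 (n1 ++ (j + N) :: s) = Atom.rename r (C.fct (n2 ++ j :: s)) := by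
    intro j s; rw [hfct2def]
    simp only
    rw [if_pos (hcondval j s), hψval]
  have hrule2new : ∀ (j : ℕ) (s : List ℕ),
      rule2 (n1 ++ (j + N) :: s) = C.rule (n2 ++ j :: s) := by
    intro j s; rw [hrule2def]
    simp only
    rw [if_pos (hcondval j s), hψval]
  have hkeptmem : ∀ u ∈ C.nodes, ¬ n2 <+: u → u ∈ nodes2 := by
    intro u hu h
    rw [hnodes2]
    exact Finset.mem_union_left _ (Finset.mem_filter.mpr ⟨hu, h⟩)
  have hmovedmem : ∀ (j : ℕ) (s : List ℕ), n2 ++ j :: s ∈ C.nodes →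
      n1 ++ (j + N) :: s ∈ nodes2 := by
    intro j s h
    rw [hnodes2]
    refine Finset.mem_union_right _ (Finset.mem_image.mpr ⟨n2 ++ j :: s,
      Finset.mem_filter.mpr ⟨h, List.prefix_append _ _, ?_⟩, hφval j s⟩)
    intro hc
    have : (n2 ++ j :: s).length = n2.length := by rw [hc]
    simp at this
  have hmem2 : ∀ u ∈ nodes2, (u ∈ C.nodes ∧ ¬ n2 <+: u) ∨
      ∃ j s, n2 ++ j :: s ∈ C.nodes ∧ u = n1 ++ (j + N) :: s := by
    intro u hu
    rw [hnodes2] at hu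
    rcases Finset.mem_union.mp hu with h | h
    · obtain ⟨h1, h2⟩ := Finset.mem_filter.mp h
      exact Or.inl ⟨h1, h2⟩
    · obtain ⟨v, hv, rfl⟩ := Finset.mem_image.mp h
      obtain ⟨hv1, hv2, hv3⟩ := Finset.mem_filter.mp hv
      obtain ⟨j, s, rfl⟩ := hrep v hv2 hv3
      exact Or.inr ⟨j, s, hv1, (hφval j s)⟩
  have hn1mem2 : n1 ∈ nodes2 := hkeptmem n1 hn1 hn2n1
  have hP1 : (LinChase.mk nodes2 fct2 rule2).nodes = nodes2 := rfl
  have hP2 : (LinChase.mk nodes2 fct2 rule2).fct = fct2 := rfl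
  have hP3 : (LinChase.mk nodes2 fct2 rule2).rule = rule2 := rfl
  -- the new tree
  refine ⟨⟨nodes2, fct2, rule2⟩, (fun x => r (σ x)), ⟨?_, ?_, ?_⟩, ?_, ?_⟩
  · -- root
    rw [hP1]
    exact hkeptmem [] hC.1 (fun h => h2ne (List.prefix_nil.mp h))
  · -- prefix-closed
    simp only [hP1]
    intro v hv u hu
    rcases hmem2 v hv with ⟨hvN, hvk⟩ | ⟨j, s, hjs, rfl⟩
    · refine hkeptmem u (hC.2.1 v hvN u hu) (fun h => hvk (h.trans hu))
    · rcases GT_prefix_append_cases hu with h | ⟨b', hb', rfl⟩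
      · refine hkeptmem u (hC.2.1 n1 hn1 u h) (fun hc => ?_)
        have := hc.trans h
        exact hn2n1 this
      · cases b' with
        | nil =>
          simpa using hn1mem2
        | cons k s' =>
          obtain ⟨rfl, hs'⟩ := List.cons_prefix_cons.mp hb'
          refine hmovedmem j s' (hC.2.1 _ hjs _ ?_)
          rw [List.prefix_append_right_inj, List.cons_prefix_cons]
          exact ⟨rfl, hs'⟩
  · -- chase-step validity at each non-root node
    simp only [hP1, hP2, hP3]
    intro v hv hvne
    rcases hmem2 v hv with ⟨hvN, hvk⟩ | ⟨j, s0, hjs, rfl⟩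
    · -- kept node
      obtain ⟨hth, B, s, hbody, hI0s, hpar, hfct, hinj, hfresh⟩ := hC.2.2 v hvN hvne
      rw [hrule2old v hvN]
      refine ⟨hth, B, s, hbody, hI0s, ?_, ?_, hinj, ?_⟩
      · intro hd
        have hdN : v.dropLast ∈ C.nodes := hC.2.1 v hvN _ (List.dropLast_prefix v)
        show B.rename s = fct2 v.dropLast
        rw [hfct2old _ hdN]
        exact hpar hd
      · show fct2 v = _
        rw [hfct2old v hvN]
        exact hfct
      · intro y hy
        refine ⟨(hfresh y hy).1, ?_⟩
        intro u hu hnpre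
        rcases hmem2 u hu with ⟨huN, _⟩ | ⟨j, s', hjs, rfl⟩
        · rw [hfct2old u huN]
          exact (hfresh y hy).2 u huN hnpre
        · rw [hfct2new j s']
          intro hcon
          have hsyv : s y ∈ (C.fct v).vars := by
            rw [hfct]
            refine GT_vars_rename.mpr ⟨y, ?_, rfl⟩
            have := Finset.mem_sdiff.mp hy
            exact GT_mem_vars.mp this.1
          rcases hRvars _ _ hcon with ⟨h1, h2⟩ | h1
          · -- value occurs in the old subtree fact
            by_cases hvw : v <+: n2 ++ j :: s'
            · -- v lies above n2
              have hvn2 : v <+: n2 ∧ v ≠ n2 := by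
                rcases List.prefix_or_prefix_of_prefix hvw
                  ((List.prefix_append _ _) : n2 <+: n2 ++ j :: s') with h | h
                · refine ⟨h, fun hc => hvk ?_⟩
                  rw [hc]
                · exact absurd h hvk
              rcases GT_chain C I0 Th hC n2 h2ne _ (n2 ++ j :: s') rfl hjs
                (List.prefix_append _ _) (fun hc => by
                  have : (n2 ++ j :: s').length = n2.length := by rw [hc]
                  simp at this) (s y) h1 with hc | ⟨p, hpN, hp1, hp2, hp3, hp4, hp5⟩
              · exact h2 hc
              · have hplen : n2.length < p.length := by
                  rcases lt_or_eq_of_le hp1.length_le with h | h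
                  · exact h
                  · exact absurd (hp1.eq_of_length h) (Ne.symm hp2)
                have hvlen : v.length < n2.length := by
                  rcases lt_or_eq_of_le hvn2.1.length_le with h | h
                  · exact h
                  · exact absurd (hvn2.1.eq_of_length h) hvn2.2
                have : ¬ p <+: v := fun hc => by have := hc.length_le; omega
                exact hp5 v hvN this hsyv
            · exact (hfresh y hy).2 _ hjs hvw h1
          · -- value occurs in the fact of n1
            have hvn1 : ¬ v <+: n1 := fun hc =>
              hnpre (hc.trans (List.prefix_append _ _))
            exact (hfresh y hy).2 n1 hn1 hvn1 h1
    · -- moved node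
      have hwne : n2 ++ j :: s0 ≠ [] := by simp
      obtain ⟨hth, B, sw, hbody, hI0w, hparw, hfctw, hinjw, hfrw⟩ :=
        hC.2.2 (n2 ++ j :: s0) hjs hwne
      have hwn2 : ¬ (n2 ++ j :: s0) <+: n2 := fun hc => by
        have := hc.length_le; simp at this
      have hfix : ∀ y ∈ (C.rule (n2 ++ j :: s0)).existVars, r (sw y) = sw y := by
        intro y hy
        refine hK4 _ (fun hc => ?_)
        exact ((hfrw y hy).2 n2 hn2 hwn2) (GT_mem_vars.mpr hc)
      rw [hrule2new j s0]
      refine ⟨hth, B, (fun x => r (sw x)), hbody, ?_, ?_, ?_, ?_, ?_⟩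
      · -- dropLast = [] case: vacuous
        intro hd
        exfalso
        cases s0 with
        | nil => rw [List.dropLast_concat] at hd; exact h1ne hd
        | cons a s0' =>
          rw [List.dropLast_append_cons] at hd
          simp at hd
      · -- parent fact
        intro _
        cases s0 with
        | nil =>
          rw [List.dropLast_concat]
          show _ = fct2 n1
          rw [hfct2old n1 hn1]
          have hpeq : B.rename sw = C.fct n2 := by
            have : (n2 ++ [j]).dropLast = n2 := List.dropLast_concat
            have h := hparw (by rw [this]; exact h2ne)
            rw [this] at h
            exact h
          calc B.rename (fun x => r (sw x)) = Atom.rename r (B.rename sw) :=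
                (GT_rename_comp r sw B).symm
            _ = Atom.rename r (C.fct n2) := by rw [hpeq]
            _ = C.fct n1 := hK2
        | cons a s0' =>
          rw [List.dropLast_append_cons]
          have hds : (j + N) :: a :: s0' ≠ [] := by simp
          rw [show ((j + N) :: a :: s0').dropLast = (j + N) :: (a :: s0').dropLast from rfl]
          rw [hfct2new j ((a :: s0').dropLast)]
          have hdw : (n2 ++ j :: a :: s0').dropLast = n2 ++ j :: (a :: s0').dropLast := by
            rw [List.dropLast_append_cons]
            rfl
          have h := hparw (by rw [hdw]; simp)
          rw [hdw] at h
          calc B.rename (fun x => r (sw x)) = Atom.rename r (B.rename sw) :=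
                (GT_rename_comp r sw B).symm
            _ = _ := by rw [h]
      · -- generated fact
        show fct2 _ = _
        rw [hfct2new j s0, hfctw]
        exact GT_rename_comp r sw _
      · -- injectivity on existential variables
        intro a ha b hb he
        have ha' := Finset.mem_coe.mp ha
        have hb' := Finset.mem_coe.mp hb
        simp only at he
        rw [hfix a ha', hfix b hb'] at he
        exact hinjw ha hb he
      · -- freshness
        intro y hy
        rw [show (fun x => r (sw x)) y = r (sw y) from rfl, hfix y hy]
        refine ⟨(hfrw y hy).1, ?_⟩
        intro u hu hnpre
        have hsynotF1 : sw y ∉ (C.fct n1).vars := by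
          refine (hfrw y hy).2 n1 hn1 (fun hc => ?_)
          have := hc.length_le; simp at this; omega
        rcases hmem2 u hu with ⟨huN, huk⟩ | ⟨j2, s2, hjs2, rfl⟩
        · rw [hfct2old u huN]
          refine (hfrw y hy).2 u huN (fun hc => huk ?_)
          exact (List.prefix_append _ _).trans hc
        · rw [hfct2new j2 s2]
          intro hcon
          rcases hRvars _ _ hcon with ⟨hc1, _⟩ | hc1
          · refine (hfrw y hy).2 _ hjs2 (fun hc => hnpre ?_) hc1
            rw [List.prefix_append_right_inj, List.cons_prefix_cons] at hc
            obtain ⟨rfl, hc'⟩ := hc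
            rw [List.prefix_append_right_inj, List.cons_prefix_cons]
            exact ⟨rfl, hc'⟩
          · exact hsynotF1 hc1
  · -- the renamed assignment is still a match
    intro A hA
    rw [LinChase.isMatch] at hm
    rw [LinChase.allFacts]
    simp only [hP1, hP2]
    have h1 : A.rename (fun x => r (σ x)) = Atom.rename r (A.rename σ) :=
      (GT_rename_comp r σ A).symm
    rw [h1]
    rcases hm A hA with hF | ⟨m, hmN, hmne, hFm⟩
    · -- image fact in the initial instance
      refine Or.inl ?_
      have : Atom.rename r (A.rename σ) = A.rename σ := by
        refine hid2 _ (fun a ha haF2 => ?_)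
        rcases hF2chain a haF2 with h | ⟨p, hp, hp1, hp2, hp3, hp4, hp5⟩
        · exact hK3 a h haF2
        · exfalso
          refine hp4 (GT_mem_adomF.mpr ⟨A.rename σ, hF, GT_mem_vars.mpr ha⟩)
      rw [this]
      exact hF
    · -- image fact generated at a node m
      by_cases hc2 : n2 <+: m
      · by_cases hceq : m = n2
        · subst hceq
          refine Or.inr ?_
          refine ⟨n1, hn1mem2, h1ne, ?_⟩
          show _ = fct2 n1
          rw [hfct2old n1 hn1, hFm, hK2]
        · obtain ⟨j, s, rfl⟩ := hrep m hc2 hceq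
          refine Or.inr ?_
          refine ⟨n1 ++ (j + N) :: s, hmovedmem j s hmN, by simp, ?_⟩
          show _ = fct2 _
          rw [hfct2new j s, hFm]
      · -- m is kept; r is the identity on its fact
        refine Or.inr ?_
        refine ⟨m, hkeptmem m hmN hc2, hmne, ?_⟩
        show _ = fct2 m
        rw [hfct2old m hmN, hFm]
        refine hid2 _ (fun a ha haF2 => ?_)
        rcases hF2chain a haF2 with h | ⟨p, hpN, hp1, hp2, hp3, hp4, hp5⟩
        · exact hK3 a h haF2
        · by_cases hpm : p <+: m
          · -- impossible by minimality of the image parent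
            exfalso
            have himg : m ∈ imageNodes C σ Q := ⟨hmN, hmne, A, hA, hFm⟩
            have hn1m : n1 <+: m := hp1.trans hpm
            have hn1n' : n1 <+: n' := hp12.trans hp2n'
            have hlcp_m : lcp m n' <+: m := GT_lcp_prefix_left m n'
            have hlcp_n' : lcp m n' <+: n' := GT_lcp_prefix_right m n'
            have hn1lcp : n1 <+: lcp m n' := GT_prefix_lcp _ _ _ hn1m hn1n'
            have hlcpA : lcp m n' ∈ augImage C σ Q := by
              rcases hn'S with (h | h) | h
              · exfalso
                rw [Set.mem_singleton_iff] at h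
                rw [h] at hp2n'
                exact h2ne (List.prefix_nil.mp hp2n')
              · exact Or.inr ⟨m, himg, n', h, rfl⟩
              · obtain ⟨v0, hv0, w0, hw0, he⟩ := h
                have hn'v0 : n' <+: v0 := by
                  rw [he]; exact GT_lcp_prefix_left v0 w0
                rcases List.prefix_or_prefix_of_prefix
                  (GT_lcp_prefix_right m v0) hn'v0 with hcase | hcase
                · have he2 : lcp m n' = lcp m v0 :=
                    GT_prefix_antisymm
                      (GT_prefix_lcp _ _ _ hlcp_m (hlcp_n'.trans hn'v0))
                      (GT_prefix_lcp _ _ _ (GT_lcp_prefix_left m v0) hcase)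
                  rw [he2]
                  exact Or.inr ⟨m, himg, v0, hv0, rfl⟩
                · exact absurd
                    (hp2n'.trans (hcase.trans (GT_lcp_prefix_left m v0))) hc2
            rcases hmin _ hlcpA (hpn1.trans hn1lcp) hlcp_n' with he | he
            · -- the lcp is n, hence n = n1 and p <+: n1: contradiction
              have h3 : n1 <+: n := he ▸ hn1lcp
              have hn1n : n1 = n := GT_prefix_antisymm h3 hpn1
              have hplcp : p <+: lcp m n' := GT_prefix_lcp _ _ _ hpm (hp3.trans hp2n')
              rw [he, ← hn1n] at hplcp
              exact hp2 (GT_prefix_antisymm hplcp hp1)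
            · -- the lcp is n', hence n2 <+: m: contradiction
              exact hc2 (hp2n'.trans (he ▸ hlcp_m))
          · exact absurd (GT_mem_vars.mpr ha) (hp5 m hmN hpm)
  · -- strictly fewer nodes
    rw [hP1]
    have hinj : Set.InjOn φ ↑(C.nodes.filter fun v => n2 <+: v ∧ v ≠ n2) := by
      intro a ha b hb he
      obtain ⟨_, ha2, ha3⟩ := Finset.mem_filter.mp (Finset.mem_coe.mp ha)
      obtain ⟨_, hb2, hb3⟩ := Finset.mem_filter.mp (Finset.mem_coe.mp hb)
      obtain ⟨ja, sa, rfl⟩ := hrep a ha2 ha3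
      obtain ⟨jb, sb, rfl⟩ := hrep b hb2 hb3
      rw [hφval, hφval] at he
      have := List.append_cancel_left he
      simp at this
      rw [this.1, this.2]
    have hdisj : Disjoint (C.nodes.filter fun v => ¬ n2 <+: v)
        (C.nodes.filter fun v => n2 <+: v ∧ v ≠ n2) := by
      rw [Finset.disjoint_filter]
      intro x _ h1 h2
      exact h1 h2.1
    have hsub : (C.nodes.filter fun v => ¬ n2 <+: v) ∪
        (C.nodes.filter fun v => n2 <+: v ∧ v ≠ n2) ⊆ C.nodes.erase n2 := by
      intro x hx
      rcases Finset.mem_union.mp hx with h | h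
      · obtain ⟨h1, h2⟩ := Finset.mem_filter.mp h
        exact Finset.mem_erase.mpr ⟨fun hc => h2 (hc ▸ List.prefix_refl n2), h1⟩
      · obtain ⟨h1, h2, h3⟩ := Finset.mem_filter.mp h
        exact Finset.mem_erase.mpr ⟨h3, h1⟩
    calc nodes2.card ≤ (C.nodes.filter fun v => ¬ n2 <+: v).card +
          ((C.nodes.filter fun v => n2 <+: v ∧ v ≠ n2).image φ).card := by
          rw [hnodes2]; exact Finset.card_union_le _ _
      _ = (C.nodes.filter fun v => ¬ n2 <+: v).card +
          (C.nodes.filter fun v => n2 <+: v ∧ v ≠ n2).card := by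
          rw [Finset.card_image_of_injOn hinj]
      _ = ((C.nodes.filter fun v => ¬ n2 <+: v) ∪
          (C.nodes.filter fun v => n2 <+: v ∧ v ≠ n2)).card := by
          rw [Finset.card_union_of_disjoint hdisj]
      _ ≤ (C.nodes.erase n2).card := Finset.card_le_card hsub
      _ < C.nodes.card := by
          rw [Finset.card_erase_of_mem hn2]
          have : 0 < C.nodes.card := Finset.card_pos.mpr ⟨n2, hn2⟩
          omega


/-- existence of tight matches (Lemma A.1). Let `Σ` be a set of linear TGDs
and `I0` an instance. If a Boolean conjunctive query `Q` has a match `σ` in the final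
chase tree of a tree-like chase sequence for `I0` and `Σ`, then there is another
tree-like chase sequence for `I0` and `Σ` with final tree `C'` and a match `σ'` of `Q` in
`C'` which is tight: whenever a node `n` is the image parent of a node `n'` in the
augmented image of `σ'`, the nodes `n` and `n'` are near. -/
theorem tight_match_exists (I0 : Finset Fact) (Th : Finset TGD)
    (hlin : ∀ τ ∈ Th, τ.linear)
    (C : LinChase) (hC : C.valid I0 Th) (Q : CQ) (σ : ℕ → ℕ)
    (hm : C.isMatch I0 σ Q) :
    ∃ (C' : LinChase) (σ' : ℕ → ℕ),
      C'.valid I0 Th ∧ C'.isMatch I0 σ' Q ∧ tightMatch C' σ' Q := by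
  classical
  have haux : ∀ (k : ℕ) (D : LinChase), D.nodes.card ≤ k → D.valid I0 Th →
      ∀ τ : ℕ → ℕ, D.isMatch I0 τ Q →
      ∃ (C' : LinChase) (σ' : ℕ → ℕ),
        C'.valid I0 Th ∧ C'.isMatch I0 σ' Q ∧ tightMatch C' σ' Q := by
    intro k
    induction k with
    | zero =>
      intro D hcard hval τ hmD
      exfalso
      have : 0 < D.nodes.card := Finset.card_pos.mpr ⟨[], hval.1⟩
      omega
    | succ k ih =>
      intro D hcard hval τ hmD
      by_cases ht : tightMatch D τ Q
      · exact ⟨D, τ, hval, hmD, ht⟩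
      · obtain ⟨C2, σ2, h1, h2, h3⟩ := GT_shrink I0 Th D hval Q τ hmD ht
        exact ih C2 (by omega) h1 σ2 h2
  exact haux C.nodes.card C le_rfl hC σ hm

end GTGDPaper
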